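/- In a unital category, given morphisms f : X → A, g : Y → A, f' : X' → A', g' : Y' → A', the product morphisms f × f' : X × X' → A × A' and g × g' : Y × Y' → A × A' Huq-commute if and only if both f and g Huq-commute and f' and g' Huq-commute. -/

import Mathlib

open CategoryTheory CategoryTheory.Limits

universe v u

noncomputable section

variable {C : Type u} [Category.{v} C]

/-- A pair of morphisms with common codomain is jointly strongly epimorphic:
it has the lifting property against all monomorphisms. -/
def JointlyStrongEpi {X Y Z : C} (f : X ⟶ Z) (g : Y ⟶ Z) : Prop :=
  ∀ {U V : C} (m : U ⟶ V) (_ : Mono m) (h : Z ⟶ V) (u : X ⟶ U) (v : Y ⟶ U),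
    u ≫ m = f ≫ h → v ≫ m = g ≫ h → ∃ t : Z ⟶ U, t ≫ m = h

variable (C) in
/-- A unital category: pointed, finitely complete, and the product inclusions
`⟨1,0⟩ : X → X × Y` and `⟨0,1⟩ : Y → X × Y` are jointly strongly epimorphic. -/
class Unital [HasZeroObject C] [HasZeroMorphisms C] [HasFiniteLimits C] : Prop where
  jse : ∀ X Y : C, JointlyStrongEpi (prod.lift (𝟙 X) (0 : X ⟶ Y)) (prod.lift (0 : Y ⟶ X) (𝟙 Y))

/-- `f : X ⟶ A` and `g : Y ⟶ A` Huq-commute: there is a cooperator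
`φ : X × Y ⟶ A` with `φ∘⟨1,0⟩ = f` and `φ∘⟨0,1⟩ = g`. -/
def HuqCommute [HasZeroMorphisms C] [HasFiniteLimits C] {X Y A : C} (f : X ⟶ A) (g : Y ⟶ A) : Prop :=
  ∃ φ : X ⨯ Y ⟶ A, prod.lift (𝟙 X) 0 ≫ φ = f ∧ prod.lift 0 (𝟙 Y) ≫ φ = g

lemma lift_zero_zero [HasZeroMorphisms C] [HasFiniteLimits C] {W P Q : C} :
    prod.lift (0 : W ⟶ P) (0 : W ⟶ Q) = 0 := by
  apply Limits.prod.hom_ext <;> simp [prod.lift_fst, prod.lift_snd]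

theorem stmt3 [HasZeroObject C] [HasZeroMorphisms C] [HasFiniteLimits C] [Unital C]
    {X Y A X' Y' A' : C} (f : X ⟶ A) (g : Y ⟶ A) (f' : X' ⟶ A') (g' : Y' ⟶ A') :
    HuqCommute (prod.map f f') (prod.map g g') ↔ (HuqCommute f g ∧ HuqCommute f' g') := by
  constructor
  · rintro ⟨φ, hf, hg⟩
    constructor
    · refine ⟨prod.map (prod.lift (𝟙 X) (0:X⟶X')) (prod.lift (𝟙 Y) (0:Y⟶Y')) ≫ φ ≫ prod.fst, ?_, ?_⟩
      · have h1 : prod.lift (𝟙 X) (0 : X ⟶ Y) ≫ prod.map (prod.lift (𝟙 X) (0:X⟶X')) (prod.lift (𝟙 Y) (0:Y⟶Y'))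
            = prod.lift (𝟙 X) (0 : X ⟶ X') ≫ prod.lift (𝟙 (X ⨯ X')) 0 := by
          apply Limits.prod.hom_ext <;> simp [lift_zero_zero]
        rw [← Category.assoc, h1, Category.assoc, reassoc_of% hf]
        simp [prod.lift_fst_assoc, prod.lift_snd_assoc]
      · have h1 : prod.lift (0 : Y ⟶ X) (𝟙 Y) ≫ prod.map (prod.lift (𝟙 X) (0:X⟶X')) (prod.lift (𝟙 Y) (0:Y⟶Y'))
            = prod.lift (𝟙 Y) (0 : Y ⟶ Y') ≫ prod.lift 0 (𝟙 (Y ⨯ Y')) := by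
          apply Limits.prod.hom_ext <;> simp [lift_zero_zero]
        rw [← Category.assoc, h1, Category.assoc, reassoc_of% hg]
        simp [prod.lift_fst_assoc, prod.lift_snd_assoc]
    · refine ⟨prod.map (prod.lift (0:X'⟶X) (𝟙 X')) (prod.lift (0:Y'⟶Y) (𝟙 Y')) ≫ φ ≫ prod.snd, ?_, ?_⟩
      · have h1 : prod.lift (𝟙 X') (0 : X' ⟶ Y') ≫ prod.map (prod.lift (0:X'⟶X) (𝟙 X')) (prod.lift (0:Y'⟶Y) (𝟙 Y'))
            = prod.lift (0 : X' ⟶ X) (𝟙 X') ≫ prod.lift (𝟙 (X ⨯ X')) 0 := by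
          apply Limits.prod.hom_ext <;> simp [lift_zero_zero]
        rw [← Category.assoc, h1, Category.assoc, reassoc_of% hf]
        simp [prod.lift_fst_assoc, prod.lift_snd_assoc]
      · have h1 : prod.lift (0 : Y' ⟶ X') (𝟙 Y') ≫ prod.map (prod.lift (0:X'⟶X) (𝟙 X')) (prod.lift (0:Y'⟶Y) (𝟙 Y'))
            = prod.lift (0 : Y' ⟶ Y) (𝟙 Y') ≫ prod.lift 0 (𝟙 (Y ⨯ Y')) := by
          apply Limits.prod.hom_ext <;> simp [lift_zero_zero]
        rw [← Category.assoc, h1, Category.assoc, reassoc_of% hg]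
        simp [prod.lift_fst_assoc, prod.lift_snd_assoc]
  · rintro ⟨⟨φ, hf, hg⟩, ⟨φ', hf', hg'⟩⟩
    refine ⟨prod.lift (prod.map prod.fst prod.fst ≫ φ) (prod.map prod.snd prod.snd ≫ φ'), ?_, ?_⟩
    · apply Limits.prod.hom_ext
      · have h1 : prod.lift (𝟙 (X ⨯ X')) (0 : _ ⟶ Y ⨯ Y') ≫ prod.map prod.fst prod.fst
            = prod.fst ≫ prod.lift (𝟙 X) 0 := by apply Limits.prod.hom_ext <;> simp [lift_zero_zero]
        rw [Category.assoc, prod.lift_fst, prod.map_fst, ← Category.assoc, h1, Category.assoc, hf]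
      · have h1 : prod.lift (𝟙 (X ⨯ X')) (0 : _ ⟶ Y ⨯ Y') ≫ prod.map prod.snd prod.snd
            = prod.snd ≫ prod.lift (𝟙 X') 0 := by apply Limits.prod.hom_ext <;> simp [lift_zero_zero]
        rw [Category.assoc, prod.lift_snd, prod.map_snd, ← Category.assoc, h1, Category.assoc, hf']
    · apply Limits.prod.hom_ext
      · have h1 : prod.lift (0 : _ ⟶ X ⨯ X') (𝟙 (Y ⨯ Y')) ≫ prod.map prod.fst prod.fst
            = prod.fst ≫ prod.lift 0 (𝟙 Y) := by apply Limits.prod.hom_ext <;> simp [lift_zero_zero]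
        rw [Category.assoc, prod.lift_fst, prod.map_fst, ← Category.assoc, h1, Category.assoc, hg]
      · have h1 : prod.lift (0 : _ ⟶ X ⨯ X') (𝟙 (Y ⨯ Y')) ≫ prod.map prod.snd prod.snd
            = prod.snd ≫ prod.lift 0 (𝟙 Y') := by apply Limits.prod.hom_ext <;> simp [lift_zero_zero]
        rw [Category.assoc, prod.lift_snd, prod.map_snd, ← Category.assoc, h1, Category.assoc, hg']
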